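/- For every r ≥ 0, one has ∫_ℝ log(cosh(√r·z)) φ(z) dz ≤ r·∫_ℝ sech²(√r·z) φ(z) dz = r·(1 - P(r)); in particular, via Gaussian integration by parts, √r·∫_ℝ z·tanh(√r·z) φ(z) dz = r·∫_ℝ sech²(√r·z) φ(z) dz. -/

import Mathlib

open MeasureTheory Real Filter

/-- The standard normal density. -/
noncomputable def gphi (u : ℝ) : ℝ := Real.exp (-u ^ 2 / 2) / Real.sqrt (2 * Real.pi)

/-- The standard normal CDF. -/
noncomputable def gPhi (u : ℝ) : ℝ := ∫ s in Set.Iic u, gphi s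

/-- The standard normal tail. -/
noncomputable def gPhiBar (u : ℝ) : ℝ := 1 - gPhi u

/-- The inverse Mills ratio. -/
noncomputable def mills (u : ℝ) : ℝ := gphi u / gPhiBar u

/-- P(r) = E[tanh²(√r Z)]. -/
noncomputable def Pfun (r : ℝ) : ℝ := ∫ z : ℝ, Real.tanh (Real.sqrt r * z) ^ 2 * gphi z

/-- B(q). -/
noncomputable def Bfun (κ q : ℝ) : ℝ :=
  (1 - q) * ∫ z : ℝ, mills ((κ - Real.sqrt q * z) / Real.sqrt (1 - q)) ^ 2 * gphi z

/-- C_κ. -/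
noncomputable def Ckappa (κ : ℝ) : ℝ := ∫ z : ℝ, max (κ - z) 0 ^ 2 * gphi z

/-- The critical capacity. -/
noncomputable def alphac (κ : ℝ) : ℝ := 2 / (Real.pi * Ckappa κ)


lemma gphi_nonneg (u : ℝ) : 0 ≤ gphi u :=
  div_nonneg (Real.exp_nonneg _) (Real.sqrt_nonneg _)

lemma gphi_eq (u : ℝ) : gphi u = Real.exp (-(1/2) * u ^ 2) / Real.sqrt (2 * Real.pi) := by
  rw [gphi]; ring_nf

lemma integrable_gphi : Integrable gphi := by
  have := (integrable_exp_neg_mul_sq (by norm_num : (0:ℝ) < 1/2)).div_const (Real.sqrt (2 * Real.pi))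
  exact this.congr (by filter_upwards with x using (gphi_eq x).symm)

lemma integral_gphi : ∫ u : ℝ, gphi u = 1 := by
  have h : ∫ u : ℝ, gphi u = (∫ u : ℝ, Real.exp (-(1/2) * u ^ 2)) / Real.sqrt (2 * Real.pi) := by
    rw [← integral_div]; exact integral_congr_ae (by filter_upwards with x using gphi_eq x)
  rw [h, integral_gaussian]
  rw [show Real.pi / (1/2) = 2 * Real.pi by ring]
  rw [div_self]
  positivity

lemma hasDerivAt_gphi (x : ℝ) : HasDerivAt gphi (-x * gphi x) x := by
  have h1 : HasDerivAt (fun u : ℝ => -u ^ 2 / 2) (-x) x := by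
    have := ((hasDerivAt_pow 2 x).neg).div_const 2
    refine this.congr_deriv ?_; push_cast; ring
  have h2 := (h1.exp).div_const (Real.sqrt (2 * Real.pi))
  refine h2.congr_deriv ?_
  rw [gphi]; ring

lemma hasDerivAt_tanh (x : ℝ) : HasDerivAt Real.tanh (1 / Real.cosh x ^ 2) x := by
  have h := (Real.hasDerivAt_sinh x).div (Real.hasDerivAt_cosh x) (Real.cosh_pos x).ne'
  have he : (fun y => Real.sinh y / Real.cosh y) = Real.tanh :=
    funext fun y => (Real.tanh_eq_sinh_div_cosh y).symm
  rw [show (Real.sinh / Real.cosh) = fun y => Real.sinh y / Real.cosh y from rfl, he] at h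
  refine h.congr_deriv ?_
  have h2 := Real.cosh_sq_sub_sinh_sq x
  have h3 : Real.cosh x * Real.cosh x - Real.sinh x * Real.sinh x = 1 := by nlinarith
  rw [h3]

lemma continuous_tanh : Continuous Real.tanh := by
  have : Continuous fun y => Real.sinh y / Real.cosh y :=
    Real.continuous_sinh.div Real.continuous_cosh fun x => (Real.cosh_pos x).ne'
  exact this.congr fun y => (Real.tanh_eq_sinh_div_cosh y).symm

lemma abs_tanh_le_one (x : ℝ) : |Real.tanh x| ≤ 1 := by
  rw [Real.tanh_eq_sinh_div_cosh, abs_div, abs_of_pos (Real.cosh_pos x)]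
  rw [div_le_one (Real.cosh_pos x)]
  have h := Real.cosh_sq_sub_sinh_sq x
  nlinarith [abs_nonneg (Real.sinh x), sq_abs (Real.sinh x), Real.cosh_pos x]

lemma sech_sq_eq (x : ℝ) : (1 / Real.cosh x) ^ 2 = 1 - Real.tanh x ^ 2 := by
  have h := Real.cosh_sq_sub_sinh_sq x
  rw [Real.tanh_eq_sinh_div_cosh]
  field_simp
  linarith

lemma log_cosh_le (y : ℝ) : Real.log (Real.cosh y) ≤ y * Real.tanh y := by
  suffices h : ∀ y : ℝ, 0 ≤ y → Real.log (Real.cosh y) ≤ y * Real.tanh y by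
    rcases le_total 0 y with hy | hy
    · exact h y hy
    · have := h (-y) (by linarith)
      simpa [Real.cosh_neg, Real.tanh_neg] using this
  intro y hy
  set f : ℝ → ℝ := fun t => t * Real.tanh t - Real.log (Real.cosh t) with hf
  have hderiv : ∀ t : ℝ, HasDerivAt f (t * (1 / Real.cosh t ^ 2)) t := by
    intro t
    have h1 : HasDerivAt (fun t : ℝ => t * Real.tanh t)
        (1 * Real.tanh t + t * (1 / Real.cosh t ^ 2)) t :=
      (hasDerivAt_id t).mul (hasDerivAt_tanh t)
    have h2 : HasDerivAt (fun t : ℝ => Real.log (Real.cosh t))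
        (Real.sinh t / Real.cosh t) t :=
      (Real.hasDerivAt_cosh t).log (Real.cosh_pos t).ne'
    have h3 := h1.sub h2
    refine h3.congr_deriv ?_
    rw [← Real.tanh_eq_sinh_div_cosh]; ring
  have hmono : MonotoneOn f (Set.Ici 0) := by
    apply monotoneOn_of_deriv_nonneg (convex_Ici 0)
    · exact ((continuous_id.mul continuous_tanh).sub
        (Real.continuous_cosh.log fun x => (Real.cosh_pos x).ne')).continuousOn
    · intro t ht
      exact (hderiv t).differentiableAt.differentiableWithinAt
    · intro t ht
      rw [(hderiv t).deriv]
      rw [interior_Ici] at ht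
      have ht' : (0:ℝ) < t := ht
      positivity
  have h0 : f 0 ≤ f y := hmono (Set.self_mem_Ici) hy hy
  simp only [hf] at h0
  simp [Real.tanh_zero] at h0
  linarith

lemma gphi_eq' (u : ℝ) : gphi u = Real.exp (-(1/2) * u ^ 2) / Real.sqrt (2 * Real.pi) := by
  rw [gphi]; ring_nf

lemma cont_gphi : Continuous gphi := by
  show Continuous fun u : ℝ => Real.exp (-u ^ 2 / 2) / Real.sqrt (2 * Real.pi)
  exact (Real.continuous_exp.comp (by continuity)).div_const _

lemma integrable_mul_gphi (n : ℕ) : Integrable (fun z : ℝ => z ^ n * gphi z) := by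
  have hn : (-1 : ℝ) < (n : ℝ) := lt_of_lt_of_le neg_one_lt_zero (Nat.cast_nonneg n)
  have := (integrable_rpow_mul_exp_neg_mul_sq (by norm_num : (0:ℝ) < 1/2) hn).div_const
    (Real.sqrt (2 * Real.pi))
  apply this.congr
  filter_upwards with x
  rw [Real.rpow_natCast, gphi_eq']; ring

section c
variable (c : ℝ)

lemma cont_sech : Continuous (fun z : ℝ => (1 / Real.cosh (c * z)) ^ 2 * gphi z) := by
  apply Continuous.mul _ cont_gphi
  exact (Continuous.div continuous_const
    (Real.continuous_cosh.comp (continuous_const.mul continuous_id))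
    fun x => (Real.cosh_pos _).ne').pow 2

lemma integrable_sech : Integrable (fun z : ℝ => (1 / Real.cosh (c * z)) ^ 2 * gphi z) := by
  apply Integrable.mono' integrable_gphi (cont_sech c).aestronglyMeasurable
  filter_upwards with z
  have h1 : (0:ℝ) < Real.cosh (c * z) := Real.cosh_pos _
  have h2 : (1 / Real.cosh (c * z)) ^ 2 ≤ 1 := by
    rw [div_pow, one_pow, div_le_one (by positivity)]
    nlinarith [Real.one_le_cosh (c * z)]
  have h3 := gphi_nonneg z
  rw [Real.norm_eq_abs, abs_of_nonneg (mul_nonneg (by positivity) h3)]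
  nlinarith

lemma integrable_tanhsq : Integrable (fun z : ℝ => Real.tanh (c * z) ^ 2 * gphi z) := by
  apply Integrable.mono' integrable_gphi
  · exact (((continuous_tanh.comp (continuous_const.mul continuous_id)).pow 2).mul
      cont_gphi).aestronglyMeasurable
  · filter_upwards with z
    have h2 : Real.tanh (c * z) ^ 2 ≤ 1 := by
      have := abs_tanh_le_one (c * z)
      nlinarith [sq_abs (Real.tanh (c * z)), abs_nonneg (Real.tanh (c * z))]
    have h3 := gphi_nonneg z
    rw [Real.norm_eq_abs, abs_of_nonneg (mul_nonneg (sq_nonneg _) h3)]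
    nlinarith

lemma integrable_ztanh : Integrable (fun z : ℝ => z * Real.tanh (c * z) * gphi z) := by
  apply Integrable.mono' (integrable_mul_gphi 1).abs
  · exact ((continuous_id.mul (continuous_tanh.comp (continuous_const.mul continuous_id))).mul
      cont_gphi).aestronglyMeasurable
  · filter_upwards with z
    have h1 := abs_tanh_le_one (c * z)
    have h2 := gphi_nonneg z
    rw [Real.norm_eq_abs, abs_mul, abs_mul, abs_of_nonneg h2, pow_one, abs_mul,
      abs_of_nonneg h2]
    have h3 : |z| * |Real.tanh (c * z)| ≤ |z| * 1 :=
      mul_le_mul_of_nonneg_left h1 (abs_nonneg z)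
    nlinarith [abs_nonneg z]

lemma integrable_logcosh : Integrable (fun z : ℝ => Real.log (Real.cosh (c * z)) * gphi z) := by
  apply Integrable.mono' ((integrable_mul_gphi 2).const_mul (c ^ 2 / 2))
  · exact ((Real.continuous_cosh.comp (continuous_const.mul continuous_id)).log
      (fun x => (Real.cosh_pos _).ne') |>.mul cont_gphi).aestronglyMeasurable
  · filter_upwards with z
    have h0 : (0:ℝ) ≤ Real.log (Real.cosh (c * z)) :=
      Real.log_nonneg (Real.one_le_cosh _)
    have h1 : Real.log (Real.cosh (c * z)) ≤ (c * z) ^ 2 / 2 := by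
      have := Real.cosh_le_exp_half_sq (c * z)
      calc Real.log (Real.cosh (c * z)) ≤ Real.log (Real.exp ((c * z) ^ 2 / 2)) :=
            Real.log_le_log (Real.cosh_pos _) this
        _ = (c * z) ^ 2 / 2 := Real.log_exp _
    have h2 := gphi_nonneg z
    rw [Real.norm_eq_abs, abs_of_nonneg (mul_nonneg h0 h2)]
    calc Real.log (Real.cosh (c * z)) * gphi z ≤ ((c * z) ^ 2 / 2) * gphi z :=
          mul_le_mul_of_nonneg_right h1 h2
      _ = c ^ 2 / 2 * (z ^ 2 * gphi z) := by ring

lemma tendsto_gphi_atTop : Tendsto gphi atTop (nhds 0) := by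
  have h0 : Tendsto (fun z : ℝ => z ^ 2) atTop atTop := tendsto_pow_atTop two_ne_zero
  have h1 : Tendsto (fun z : ℝ => -z ^ 2) atTop atBot := tendsto_neg_atTop_atBot.comp h0
  have h2 : Tendsto (fun z : ℝ => -z ^ 2 / 2) atTop atBot := h1.atBot_div_const (by norm_num)
  have h3 := (Real.tendsto_exp_atBot.comp h2).div_const (Real.sqrt (2 * Real.pi))
  rw [zero_div] at h3
  exact h3.congr fun z => rfl

lemma tendsto_gphi_atBot : Tendsto gphi atBot (nhds 0) := by
  have := tendsto_gphi_atTop.comp tendsto_neg_atBot_atTop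
  apply this.congr
  intro x
  show gphi (-x) = gphi x
  rw [gphi_eq', gphi_eq', neg_sq]

lemma tendsto_F_atTop : Tendsto (fun z => Real.tanh (c * z) * gphi z) atTop (nhds 0) := by
  apply squeeze_zero_norm _ tendsto_gphi_atTop
  intro z
  rw [norm_mul, Real.norm_eq_abs, Real.norm_eq_abs, abs_of_nonneg (gphi_nonneg z)]
  nlinarith [abs_tanh_le_one (c * z), gphi_nonneg z, abs_nonneg (Real.tanh (c * z))]

lemma tendsto_F_atBot : Tendsto (fun z => Real.tanh (c * z) * gphi z) atBot (nhds 0) := by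
  apply squeeze_zero_norm _ tendsto_gphi_atBot
  intro z
  rw [norm_mul, Real.norm_eq_abs, Real.norm_eq_abs, abs_of_nonneg (gphi_nonneg z)]
  nlinarith [abs_tanh_le_one (c * z), gphi_nonneg z, abs_nonneg (Real.tanh (c * z))]

lemma hasDerivAt_F (z : ℝ) :
    HasDerivAt (fun z => Real.tanh (c * z) * gphi z)
      (c * ((1 / Real.cosh (c * z)) ^ 2 * gphi z) - z * Real.tanh (c * z) * gphi z) z := by
  have h0 : HasDerivAt (fun y : ℝ => c * y) c z := by
    simpa using (hasDerivAt_id z).const_mul c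
  have h1 : HasDerivAt (fun z : ℝ => Real.tanh (c * z)) (1 / Real.cosh (c * z) ^ 2 * c) z :=
    (hasDerivAt_tanh (c * z)).comp z h0
  have h2 := h1.mul (hasDerivAt_gphi z)
  refine h2.congr_deriv ?_
  rw [div_pow, one_pow]
  ring

lemma ibp : ∫ z : ℝ, z * Real.tanh (c * z) * gphi z
    = c * ∫ z : ℝ, (1 / Real.cosh (c * z)) ^ 2 * gphi z := by
  set F' : ℝ → ℝ := fun z =>
    c * ((1 / Real.cosh (c * z)) ^ 2 * gphi z) - z * Real.tanh (c * z) * gphi z with hF'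
  have hG : Integrable (fun z : ℝ => c * ((1 / Real.cosh (c * z)) ^ 2 * gphi z)) :=
    (integrable_sech c).const_mul c
  have hint : Integrable F' := hG.sub (integrable_ztanh c)
  have hIic : ∫ z in Set.Iic (0:ℝ), F' z = Real.tanh (c * 0) * gphi 0 - 0 := by
    apply integral_Iic_of_hasDerivAt_of_tendsto
      (f := fun z => Real.tanh (c * z) * gphi z) (m := 0)
    · exact ((continuous_tanh.comp (continuous_const.mul continuous_id)).mul
        cont_gphi).continuousWithinAt
    · exact fun x _ => hasDerivAt_F c x
    · exact hint.integrableOn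
    · exact tendsto_F_atBot c
  have hIoi : ∫ z in Set.Ioi (0:ℝ), F' z = 0 - Real.tanh (c * 0) * gphi 0 := by
    apply integral_Ioi_of_hasDerivAt_of_tendsto
      (f := fun z => Real.tanh (c * z) * gphi z) (m := 0)
    · exact ((continuous_tanh.comp (continuous_const.mul continuous_id)).mul
        cont_gphi).continuousWithinAt
    · exact fun x _ => hasDerivAt_F c x
    · exact hint.integrableOn
    · exact tendsto_F_atTop c
  have htot : ∫ z : ℝ, F' z = 0 := by
    rw [← intervalIntegral.integral_Iic_add_Ioi hint.integrableOn hint.integrableOn,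
      hIic, hIoi]
    ring
  rw [hF'] at htot
  rw [integral_sub hG (integrable_ztanh c), integral_const_mul] at htot
  linarith

end c

theorem stmt_19 (r : ℝ) (hr : 0 ≤ r) :
    (∫ z : ℝ, Real.log (Real.cosh (Real.sqrt r * z)) * gphi z)
      ≤ r * ∫ z : ℝ, (1 / Real.cosh (Real.sqrt r * z)) ^ 2 * gphi z ∧
    r * (∫ z : ℝ, (1 / Real.cosh (Real.sqrt r * z)) ^ 2 * gphi z) = r * (1 - Pfun r) ∧
    Real.sqrt r * (∫ z : ℝ, z * Real.tanh (Real.sqrt r * z) * gphi z)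
      = r * ∫ z : ℝ, (1 / Real.cosh (Real.sqrt r * z)) ^ 2 * gphi z := by
  set c : ℝ := Real.sqrt r with hc
  have hcc : c * c = r := Real.mul_self_sqrt hr
  have part3 : c * (∫ z : ℝ, z * Real.tanh (c * z) * gphi z)
      = r * ∫ z : ℝ, (1 / Real.cosh (c * z)) ^ 2 * gphi z := by
    rw [ibp c, ← mul_assoc, hcc]
  have part2 : (∫ z : ℝ, (1 / Real.cosh (c * z)) ^ 2 * gphi z) = 1 - Pfun r := by
    have hpt : ∀ z : ℝ, (1 / Real.cosh (c * z)) ^ 2 * gphi z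
        = gphi z - Real.tanh (c * z) ^ 2 * gphi z := by
      intro z; rw [sech_sq_eq]; ring
    calc (∫ z : ℝ, (1 / Real.cosh (c * z)) ^ 2 * gphi z)
        = ∫ z : ℝ, (gphi z - Real.tanh (c * z) ^ 2 * gphi z) :=
          integral_congr_ae (Filter.Eventually.of_forall hpt)
      _ = (∫ z : ℝ, gphi z) - ∫ z : ℝ, Real.tanh (c * z) ^ 2 * gphi z :=
          integral_sub integrable_gphi (integrable_tanhsq c)
      _ = 1 - Pfun r := by rw [integral_gphi, Pfun, ← hc]
  refine ⟨?_, by rw [part2], part3⟩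
  have hmono : (∫ z : ℝ, Real.log (Real.cosh (c * z)) * gphi z)
      ≤ ∫ z : ℝ, c * (z * Real.tanh (c * z) * gphi z) := by
    apply integral_mono (integrable_logcosh c) ((integrable_ztanh c).const_mul c)
    intro z
    have h := mul_le_mul_of_nonneg_right (log_cosh_le (c * z)) (gphi_nonneg z)
    calc Real.log (Real.cosh (c * z)) * gphi z ≤ (c * z) * Real.tanh (c * z) * gphi z := h
      _ = c * (z * Real.tanh (c * z) * gphi z) := by ring
  calc (∫ z : ℝ, Real.log (Real.cosh (c * z)) * gphi z)
      ≤ ∫ z : ℝ, c * (z * Real.tanh (c * z) * gphi z) := hmono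
    _ = c * ∫ z : ℝ, z * Real.tanh (c * z) * gphi z := integral_const_mul c _
    _ = r * ∫ z : ℝ, (1 / Real.cosh (c * z)) ^ 2 * gphi z := part3
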